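/- Let g(x,y) = (y - f(x))² - (y - f_ρ(x))², where f_ρ is the regression function of ρ, |y| ≤ M a.s., ‖f‖_∞ ≤ M, ‖f_ρ‖_∞ ≤ M. Then E[g²] ≤ 16M² E[g]. -/
import Mathlib


open MeasureTheory

/-- For `g(x,y) = (y - f(x))² - (y - f_ρ(x))²` with `f_ρ` the regression
function of `ρ`, `|y| ≤ M` a.s., `‖f‖_∞ ≤ M`, `‖f_ρ‖_∞ ≤ M`, one has
`E[g²] ≤ 16M² E[g]`. -/
theorem variance_loss_difference_bound
    {X : Type*} [MeasurableSpace X]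
    (ρ : Measure (X × ℝ)) [IsProbabilityMeasure ρ]
    (M : ℝ) (hM : 0 < M)
    (hY : ∀ᵐ z ∂ρ, |z.2| ≤ M)
    (fρ : X → ℝ) (hfρ : ∀ x, fρ x = ∫ y, y ∂(ρ.condKernel x))
    (hfρM : ∀ x, |fρ x| ≤ M)
    (f : X → ℝ) (hf : Measurable f) (hfM : ∀ x, |f x| ≤ M)
    (g : X × ℝ → ℝ)
    (hg : ∀ z, g z = (z.2 - f z.1) ^ 2 - (z.2 - fρ z.1) ^ 2) :
    ∫ z, (g z) ^ 2 ∂ρ ≤ 16 * M ^ 2 * ∫ z, g z ∂ρ := by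
  -- measurability of fρ
  have hfρ_sm : StronglyMeasurable fρ := by
    have h1 : StronglyMeasurable fun x => ∫ y, (fun p : X × ℝ => p.2) (x, y) ∂ρ.condKernel x :=
      (measurable_snd.stronglyMeasurable).integral_kernel_prod_right'
    have : fρ = fun x => ∫ y, y ∂ρ.condKernel x := funext hfρ
    rw [this]; exact h1
  have hfρm : Measurable fρ := hfρ_sm.measurable
  -- measurability of g
  have hgm : Measurable g := by
    have : g = fun z : X × ℝ => (z.2 - f z.1) ^ 2 - (z.2 - fρ z.1) ^ 2 := funext hg
    rw [this]
    exact ((measurable_snd.sub (hf.comp measurable_fst)).pow_const 2).sub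
      ((measurable_snd.sub (hfρm.comp measurable_fst)).pow_const 2)
  -- auxiliary functions
  set d : X × ℝ → ℝ := fun z => (f z.1 - fρ z.1) ^ 2 with hd
  set h : X × ℝ → ℝ := fun z => (f z.1 - fρ z.1) * (fρ z.1 - z.2) with hh
  have hdm : Measurable d := ((hf.comp measurable_fst).sub (hfρm.comp measurable_fst)).pow_const 2
  have hhm : Measurable h :=
    ((hf.comp measurable_fst).sub (hfρm.comp measurable_fst)).mul
      ((hfρm.comp measurable_fst).sub measurable_snd)
  -- integrability helper
  have bounded_int : ∀ (F : X × ℝ → ℝ), Measurable F → ∀ C : ℝ,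
      (∀ᵐ z ∂ρ, ‖F z‖ ≤ C) → Integrable F ρ := fun F hFm C hC =>
    Integrable.mono' (integrable_const C) hFm.aestronglyMeasurable hC
  have habs : ∀ a : ℝ, |a| ≤ M → ∀ b : ℝ, |b| ≤ M → |a - b| ≤ 2 * M := by
    intro a ha b hb
    calc |a - b| ≤ |a| + |b| := abs_sub _ _
    _ ≤ 2 * M := by linarith
  -- integrability facts
  have hg_int : Integrable g ρ := by
    refine bounded_int g hgm (8 * M ^ 2) ?_
    filter_upwards [hY] with z hz
    rw [hg z, Real.norm_eq_abs]
    have h1 := habs z.2 hz (f z.1) (hfM z.1)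
    have h2 := habs z.2 hz (fρ z.1) (hfρM z.1)
    have e1 : (z.2 - f z.1) ^ 2 ≤ (2 * M) ^ 2 := sq_le_sq' (by linarith [abs_le.1 h1]) (abs_le.1 h1).2
    have e2 : (z.2 - fρ z.1) ^ 2 ≤ (2 * M) ^ 2 := sq_le_sq' (by linarith [abs_le.1 h2]) (abs_le.1 h2).2
    rw [abs_sub_le_iff]
    constructor <;> nlinarith [sq_nonneg (z.2 - f z.1), sq_nonneg (z.2 - fρ z.1)]
  have hgsq_int : Integrable (fun z => (g z) ^ 2) ρ := by
    refine bounded_int _ (hgm.pow_const 2) (64 * M ^ 4) ?_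
    filter_upwards [hY] with z hz
    rw [Real.norm_eq_abs, abs_pow, sq_abs, hg z]
    have h1 := habs z.2 hz (f z.1) (hfM z.1)
    have h2 := habs z.2 hz (fρ z.1) (hfρM z.1)
    have e1 : (z.2 - f z.1) ^ 2 ≤ (2 * M) ^ 2 := sq_le_sq' (by linarith [abs_le.1 h1]) (abs_le.1 h1).2
    have e2 : (z.2 - fρ z.1) ^ 2 ≤ (2 * M) ^ 2 := sq_le_sq' (by linarith [abs_le.1 h2]) (abs_le.1 h2).2
    nlinarith [sq_nonneg (z.2 - f z.1), sq_nonneg (z.2 - fρ z.1),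
      mul_nonneg (sq_nonneg (z.2 - f z.1)) (sq_nonneg (z.2 - fρ z.1)), sq_nonneg M, hM.le]
  have hd_int : Integrable d ρ := by
    refine bounded_int d hdm (4 * M ^ 2) ?_
    filter_upwards with z
    have h1 := habs (f z.1) (hfM z.1) (fρ z.1) (hfρM z.1)
    rw [Real.norm_eq_abs, abs_pow, sq_abs]
    nlinarith [abs_nonneg (f z.1 - fρ z.1), sq_abs (f z.1 - fρ z.1)]
  have hh_int : Integrable h ρ := by
    refine bounded_int h hhm (4 * M ^ 2) ?_
    filter_upwards [hY] with z hz
    have h1 := habs (f z.1) (hfM z.1) (fρ z.1) (hfρM z.1)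
    have h2 := habs (fρ z.1) (hfρM z.1) z.2 hz
    rw [Real.norm_eq_abs, abs_mul]
    nlinarith [abs_nonneg (f z.1 - fρ z.1), abs_nonneg (fρ z.1 - z.2)]
  -- the cross term vanishes
  have hcross : ∫ z, h z ∂ρ = 0 := by
    rw [← MeasureTheory.Measure.integral_condKernel hh_int]
    have hYae : ∀ᵐ x ∂ρ.fst, ∀ᵐ y ∂ρ.condKernel x, |y| ≤ M := by
      exact MeasureTheory.Measure.ae_ae_of_ae_compProd (p := fun z : X × ℝ => |z.2| ≤ M)
        (by rwa [ρ.disintegrate ρ.condKernel])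
    have : ∀ᵐ x ∂ρ.fst, (∫ y, h (x, y) ∂ρ.condKernel x) = 0 := by
      filter_upwards [hYae] with x hx
      have hid : Integrable (fun y : ℝ => y) (ρ.condKernel x) := by
        refine Integrable.mono' (integrable_const M) aestronglyMeasurable_id ?_
        filter_upwards [hx] with y hy
        rwa [Real.norm_eq_abs]
      simp only [hh]
      rw [integral_const_mul, integral_sub (integrable_const _) hid, integral_const]
      simp [← hfρ x]
    rw [integral_congr_ae this, integral_zero]
  -- E[g] = E[d]
  have hgd : ∀ z, g z = d z + 2 * h z := by
    intro z
    rw [hg z]; simp only [hd, hh]; ring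
  have hEg : ∫ z, g z ∂ρ = ∫ z, d z ∂ρ := by
    calc ∫ z, g z ∂ρ = ∫ z, (d z + 2 * h z) ∂ρ := by exact integral_congr_ae (Filter.Eventually.of_forall hgd)
    _ = ∫ z, d z ∂ρ + 2 * ∫ z, h z ∂ρ := by
        rw [integral_add hd_int (hh_int.const_mul 2), integral_const_mul]
    _ = ∫ z, d z ∂ρ := by rw [hcross]; ring
  -- pointwise bound g² ≤ 16M² d  (a.e.)
  have hptwise : ∀ᵐ z ∂ρ, (g z) ^ 2 ≤ 16 * M ^ 2 * d z := by
    filter_upwards [hY] with z hz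
    rw [hg z]
    simp only [hd]
    obtain ⟨hy1, hy2⟩ := abs_le.1 hz
    obtain ⟨hf1, hf2⟩ := abs_le.1 (hfM z.1)
    obtain ⟨hr1, hr2⟩ := abs_le.1 (hfρM z.1)
    have key : ((z.2 - f z.1) ^ 2 - (z.2 - fρ z.1) ^ 2) ^ 2
        = (f z.1 - fρ z.1) ^ 2 * (2 * z.2 - f z.1 - fρ z.1) ^ 2 := by ring
    rw [key]
    have hb : (2 * z.2 - f z.1 - fρ z.1) ^ 2 ≤ (4 * M) ^ 2 :=
      sq_le_sq' (by linarith) (by linarith)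
    nlinarith [sq_nonneg (f z.1 - fρ z.1)]
  calc ∫ z, (g z) ^ 2 ∂ρ ≤ ∫ z, 16 * M ^ 2 * d z ∂ρ :=
        integral_mono_ae hgsq_int (hd_int.const_mul _) hptwise
  _ = 16 * M ^ 2 * ∫ z, d z ∂ρ := integral_const_mul _ _
  _ = 16 * M ^ 2 * ∫ z, g z ∂ρ := by rw [hEg]
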